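/- Let m ≥ 3 be an integer and 0 < p < 1/(m−1). Define the m-ary additive channel Q on ZMod m by Q(y|x1,x2) = 1 − (m−1)p if y = x1 + x2 (mod m) and Q(y|x1,x2) = p otherwise, and set D_1(x1,x2‖z1,z2) = D_Q(x1,x2‖z1,x2), D_2(x1,x2‖z1,z2) = D_Q(x1,x2‖x1,z2), D_3(x1,x2‖z1,z2) = D_Q(x1,x2‖z1,z2). Then the supremum, over all probability mass functions P on (ZMod m)⁴, of min_{i ∈ {1,2,3}} Σ_{(x1,x2,z1,z2)} P(x1,x2,z1,z2) · D_i(x1,x2‖z1,z2) is attained and equals (1 − mp) · log₂( (1 − (m−1)p) / p ), which also equals max_{i ∈ {1,2,3}} max_{(x1,x2,z1,z2)} D_i(x1,x2‖z1,z2); in particular it is attained by the point mass at (x1,x2,z1,z2) = (0, 0, 1, 1). -/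
import Mathlib


/-- The `m`-ary additive MAC: `Q(y | x1, x2) = 1 - (m-1)p` if `y = x1 + x2 (mod m)`,
and `p` otherwise. -/
noncomputable def Qmary (m : ℕ) (p : ℝ) (x1 x2 y : ZMod m) : ℝ :=
  if y = x1 + x2 then 1 - ((m : ℝ) - 1) * p else p

/-- The divergence `D_Q(x1,x2 ‖ z1,z2) = Σ_y Q(y|x1,x2) log₂(Q(y|x1,x2)/Q(y|z1,z2))`
for the `m`-ary additive MAC. -/
noncomputable def DQmary (m : ℕ) [NeZero m] (p : ℝ) (x1 x2 z1 z2 : ZMod m) : ℝ :=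
  ∑ y : ZMod m, Qmary m p x1 x2 y * Real.logb 2 (Qmary m p x1 x2 y / Qmary m p z1 z2 y)

/-- `E_P[D_1]`: the expectation of `D_1(x1,x2‖z1,z2) = D_Q(x1,x2‖z1,x2)` under a pmf `P`
on input quadruples. -/
noncomputable def expD1 (m : ℕ) [NeZero m] (p : ℝ)
    (P : ZMod m × ZMod m × ZMod m × ZMod m → ℝ) : ℝ :=
  ∑ t : ZMod m × ZMod m × ZMod m × ZMod m, P t * DQmary m p t.1 t.2.1 t.2.2.1 t.2.1

/-- `E_P[D_2]`: the expectation of `D_2(x1,x2‖z1,z2) = D_Q(x1,x2‖x1,z2)` under a pmf `P`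
on input quadruples. -/
noncomputable def expD2 (m : ℕ) [NeZero m] (p : ℝ)
    (P : ZMod m × ZMod m × ZMod m × ZMod m → ℝ) : ℝ :=
  ∑ t : ZMod m × ZMod m × ZMod m × ZMod m, P t * DQmary m p t.1 t.2.1 t.1 t.2.2.2

/-- `E_P[D_3]`: the expectation of `D_3(x1,x2‖z1,z2) = D_Q(x1,x2‖z1,z2)` under a pmf `P`
on input quadruples. -/
noncomputable def expD3 (m : ℕ) [NeZero m] (p : ℝ)
    (P : ZMod m × ZMod m × ZMod m × ZMod m → ℝ) : ℝ :=
  ∑ t : ZMod m × ZMod m × ZMod m × ZMod m, P t * DQmary m p t.1 t.2.1 t.2.2.1 t.2.2.2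


lemma DQmary_eq (m : ℕ) [NeZero m] (hm : 3 ≤ m) (p : ℝ) (hp0 : 0 < p)
    (hp1 : p < 1 / ((m : ℝ) - 1)) (x1 x2 z1 z2 : ZMod m) :
    DQmary m p x1 x2 z1 z2 =
      if x1 + x2 = z1 + z2 then 0
      else (1 - (m : ℝ) * p) * Real.logb 2 ((1 - ((m : ℝ) - 1) * p) / p) := by
  have hm1 : (0:ℝ) < (m : ℝ) - 1 := by
    have : (3:ℝ) ≤ (m : ℝ) := by exact_mod_cast hm
    linarith
  have hq : (0:ℝ) < 1 - ((m : ℝ) - 1) * p := by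
    nlinarith [(lt_div_iff₀ hm1).mp hp1]
  unfold DQmary Qmary
  by_cases h : x1 + x2 = z1 + z2
  · rw [if_pos h]
    apply Finset.sum_eq_zero
    intro y _
    rw [h]
    have hpos : (0:ℝ) < (if y = z1 + z2 then 1 - ((m : ℝ) - 1) * p else p) := by
      split
      · exact hq
      · exact hp0
    rw [div_self hpos.ne', Real.logb_one, mul_zero]
  · rw [if_neg h]
    have key : ∀ y : ZMod m,
        (if y = x1 + x2 then 1 - ((m : ℝ) - 1) * p else p) *
          Real.logb 2 ((if y = x1 + x2 then 1 - ((m : ℝ) - 1) * p else p) /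
            (if y = z1 + z2 then 1 - ((m : ℝ) - 1) * p else p))
        = (if y = x1 + x2 then (1 - ((m : ℝ) - 1) * p) *
              Real.logb 2 ((1 - ((m : ℝ) - 1) * p) / p) else 0)
          + (if y = z1 + z2 then p * Real.logb 2 (p / (1 - ((m : ℝ) - 1) * p)) else 0) := by
      intro y
      by_cases h1 : y = x1 + x2
      · have h2 : ¬ y = z1 + z2 := by rw [h1]; exact h
        rw [if_pos h1, if_pos h1, if_neg h2, if_neg h2, add_zero]
      · rw [if_neg h1, if_neg h1, zero_add]
        by_cases h2 : y = z1 + z2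
        · rw [if_pos h2, if_pos h2]
        · rw [if_neg h2, if_neg h2, div_self hp0.ne', Real.logb_one, mul_zero]
    simp only [key]
    rw [Finset.sum_add_distrib, Finset.sum_ite_eq' Finset.univ, Finset.sum_ite_eq' Finset.univ]
    simp only [Finset.mem_univ, if_true]
    rw [Real.logb_div hq.ne' hp0.ne', Real.logb_div hp0.ne' hq.ne']
    ring

/-- For the `m`-ary additive MAC with `m ≥ 3` and `0 < p < 1/(m-1)`:
`D_l = sup_P min_i E_P[D_i]` is attained and equals
`(1 - mp) log₂((1-(m-1)p)/p)`, which is also the unrestricted maximum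
`D_u = max_i max D_i`; moreover the point mass at `(0,0,1,1)` attains the supremum. -/
theorem mary_additive_Dl_eq_Du (m : ℕ) [NeZero m] (hm : 3 ≤ m)
    (p : ℝ) (hp0 : 0 < p) (hp1 : p < 1 / ((m : ℝ) - 1)) :
    IsGreatest
        {x : ℝ | ∃ P : ZMod m × ZMod m × ZMod m × ZMod m → ℝ,
          (∀ t, 0 ≤ P t) ∧ (∑ t, P t = 1) ∧
          x = min (expD1 m p P) (min (expD2 m p P) (expD3 m p P))}
        ((1 - (m : ℝ) * p) * Real.logb 2 ((1 - ((m : ℝ) - 1) * p) / p)) ∧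
      IsGreatest
        ((Set.range fun t : ZMod m × ZMod m × ZMod m × ZMod m =>
            DQmary m p t.1 t.2.1 t.2.2.1 t.2.1) ∪
          (Set.range fun t : ZMod m × ZMod m × ZMod m × ZMod m =>
            DQmary m p t.1 t.2.1 t.1 t.2.2.2) ∪
          (Set.range fun t : ZMod m × ZMod m × ZMod m × ZMod m =>
            DQmary m p t.1 t.2.1 t.2.2.1 t.2.2.2))
        ((1 - (m : ℝ) * p) * Real.logb 2 ((1 - ((m : ℝ) - 1) * p) / p)) ∧
      min (expD1 m p fun t => if t = (0, 0, 1, 1) then 1 else 0)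
          (min (expD2 m p fun t => if t = (0, 0, 1, 1) then 1 else 0)
            (expD3 m p fun t => if t = (0, 0, 1, 1) then 1 else 0)) =
        (1 - (m : ℝ) * p) * Real.logb 2 ((1 - ((m : ℝ) - 1) * p) / p) := by
  
  haveI : Fact (1 < m) := ⟨by omega⟩
  set c : ℝ := (1 - (m : ℝ) * p) * Real.logb 2 ((1 - ((m : ℝ) - 1) * p) / p) with hc_def
  have hm1 : (0:ℝ) < (m : ℝ) - 1 := by
    have : (3:ℝ) ≤ (m : ℝ) := by exact_mod_cast hm
    linarith
  have hq : (0:ℝ) < 1 - ((m : ℝ) - 1) * p := by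
    nlinarith [(lt_div_iff₀ hm1).mp hp1]
  have hc0 : 0 ≤ c := by
    rcases le_or_gt p (1 - ((m : ℝ) - 1) * p) with hle | hlt
    · apply mul_nonneg
      · nlinarith
      · apply Real.logb_nonneg one_lt_two
        rw [le_div_iff₀ hp0]; linarith
    · have ha : 1 - (m : ℝ) * p ≤ 0 := by nlinarith
      have hb : Real.logb 2 ((1 - ((m : ℝ) - 1) * p) / p) ≤ 0 := by
        apply Real.logb_nonpos one_lt_two (by positivity)
        rw [div_le_one hp0]; linarith
      nlinarith
  have hDQ_le : ∀ x1 x2 z1 z2 : ZMod m, DQmary m p x1 x2 z1 z2 ≤ c := by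
    intro x1 x2 z1 z2
    rw [DQmary_eq m hm p hp0 hp1]
    split
    · exact hc0
    · exact le_rfl
  have h01 : ((0:ZMod m) + 0 ≠ 1 + 0) := by
    simpa using (zero_ne_one (α := ZMod m))
  have h01' : ((0:ZMod m) + 0 ≠ 0 + 1) := by
    simpa using (zero_ne_one (α := ZMod m))
  have h02 : ((0:ZMod m) + 0 ≠ 1 + 1) := by
    intro h
    have h2 : ((2:ℕ) : ZMod m) = 0 := by push_cast; linear_combination -h
    rw [ZMod.natCast_eq_zero_iff] at h2
    have := Nat.le_of_dvd (by norm_num) h2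
    omega
  have hpt : ∀ f : ZMod m × ZMod m × ZMod m × ZMod m → ℝ,
      (∑ t : ZMod m × ZMod m × ZMod m × ZMod m,
        (if t = ((0:ZMod m), (0:ZMod m), (1:ZMod m), (1:ZMod m)) then (1:ℝ) else 0) * f t)
        = f (0, 0, 1, 1) := by
    intro f
    rw [Finset.sum_eq_single ((0:ZMod m), (0:ZMod m), (1:ZMod m), (1:ZMod m))]
    · rw [if_pos rfl, one_mul]
    · intro b _ hb; rw [if_neg hb, zero_mul]
    · intro hb; exact absurd (Finset.mem_univ _) hb
  have hval1 : expD1 m p (fun t => if t = (0, 0, 1, 1) then 1 else 0) = c := by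
    rw [expD1, hpt]
    rw [DQmary_eq m hm p hp0 hp1, if_neg h01]
  have hval2 : expD2 m p (fun t => if t = (0, 0, 1, 1) then 1 else 0) = c := by
    rw [expD2, hpt]
    rw [DQmary_eq m hm p hp0 hp1, if_neg h01']
  have hval3 : expD3 m p (fun t => if t = (0, 0, 1, 1) then 1 else 0) = c := by
    rw [expD3, hpt]
    rw [DQmary_eq m hm p hp0 hp1, if_neg h02]
  have hmin : min (expD1 m p fun t => if t = (0, 0, 1, 1) then 1 else 0)
          (min (expD2 m p fun t => if t = (0, 0, 1, 1) then 1 else 0)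
            (expD3 m p fun t => if t = (0, 0, 1, 1) then 1 else 0)) = c := by
    rw [hval1, hval2, hval3, min_self, min_self]
  refine ⟨⟨?_, ?_⟩, ⟨?_, ?_⟩, hmin⟩
  · refine ⟨(fun t => if t = (0, 0, 1, 1) then 1 else 0), ?_, ?_, hmin.symm⟩
    · intro t; dsimp only; split <;> norm_num
    · rw [Finset.sum_eq_single ((0:ZMod m), (0:ZMod m), (1:ZMod m), (1:ZMod m))]
      · rw [if_pos rfl]
      · intro b _ hb; rw [if_neg hb]
      · intro hb; exact absurd (Finset.mem_univ _) hb
  · rintro x ⟨P, hP0, hP1, rfl⟩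
    have : expD1 m p P ≤ c := by
      rw [expD1]
      calc ∑ t : ZMod m × ZMod m × ZMod m × ZMod m, P t * DQmary m p t.1 t.2.1 t.2.2.1 t.2.1
          ≤ ∑ t : ZMod m × ZMod m × ZMod m × ZMod m, P t * c :=
            Finset.sum_le_sum fun t _ =>
              mul_le_mul_of_nonneg_left (hDQ_le _ _ _ _) (hP0 t)
        _ = c := by rw [← Finset.sum_mul, hP1, one_mul]
    exact le_trans (min_le_left _ _) this
  · exact Or.inr ⟨((0:ZMod m), (0:ZMod m), (1:ZMod m), (1:ZMod m)), by
      show DQmary m p 0 0 1 1 = c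
      rw [DQmary_eq m hm p hp0 hp1, if_neg h02]⟩
  · rintro x ((⟨t, rfl⟩ | ⟨t, rfl⟩) | ⟨t, rfl⟩) <;> exact hDQ_le _ _ _ _
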